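/- Let σ be a finite positive Borel measure on ℝ with compact support and let (P,Q) be a diagonal Padé pair of order n for the Markov function σ̂ (which is holomorphic on ℂ∖supp σ and tends to 0 at ∞). Then ∫ x^k Q(x) dσ(x) = 0 for all k = 0, 1, …, n−1. -/

import Mathlib

open MeasureTheory Polynomial Finset Filter

private lemma aux_int {σ : Measure ℝ} [IsFiniteMeasure σ] {K : Set ℝ}
    (hae : ∀ᵐ t ∂σ, t ∈ K) {f : ℝ → ℂ} (hf : AEStronglyMeasurable f σ)
    {C : ℝ} (hC : ∀ t ∈ K, ‖f t‖ ≤ C) : Integrable f σ :=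
  (integrable_const C).mono' hf (hae.mono fun t ht => hC t ht)

private lemma aux_cauchy {σ : Measure ℝ} [IsFiniteMeasure σ] {K : Set ℝ}
    (hae : ∀ᵐ t ∂σ, t ∈ K) {f : ℝ → ℂ} (hf : Continuous f)
    {Cf M : ℝ} (hCf : ∀ t ∈ K, ‖f t‖ ≤ Cf)
    (hM : ∀ t ∈ K, |t| ≤ M) {z : ℂ} (hz : M < ‖z‖) :
    Integrable (fun t : ℝ => f t * (z - (t : ℂ))⁻¹) σ ∧
      ‖∫ t : ℝ, f t * (z - (t : ℂ))⁻¹ ∂σ‖ ≤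
        Cf * (‖z‖ - M)⁻¹ * (σ Set.univ).toReal := by
  have hbd : ∀ t ∈ K, ‖f t * (z - (t : ℂ))⁻¹‖ ≤ Cf * (‖z‖ - M)⁻¹ := by
    intro t ht
    have h1 : ‖z‖ - M ≤ ‖z - (t : ℂ)‖ := by
      have h2 : ‖z‖ - ‖(t : ℂ)‖ ≤ ‖z - (t : ℂ)‖ := norm_sub_norm_le _ _
      rw [Complex.norm_real, Real.norm_eq_abs] at h2
      linarith [hM t ht]
    have hpos : (0 : ℝ) < ‖z‖ - M := by linarith
    rw [norm_mul, norm_inv]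
    exact mul_le_mul (hCf t ht) (inv_anti₀ hpos h1)
      (inv_nonneg.mpr (norm_nonneg _)) (le_trans (norm_nonneg _) (hCf t ht))
  have hmeas : AEStronglyMeasurable (fun t : ℝ => f t * (z - (t : ℂ))⁻¹) σ :=
    (hf.measurable.mul ((measurable_const.sub Complex.measurable_ofReal).inv)).aestronglyMeasurable
  refine ⟨aux_int hae hmeas hbd, ?_⟩
  exact norm_integral_le_of_norm_le_const (hae.mono fun t ht => hbd t ht)

private lemma alg1 (QQ : Polynomial ℂ) {N : ℕ} (hQ : QQ.natDegree < N) {z t : ℂ}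
    (h : z - t ≠ 0) :
    QQ.eval z * (z - t)⁻¹ =
      (∑ i ∈ Finset.range N, QQ.coeff i * ∑ j ∈ Finset.range i, z ^ j * t ^ (i - 1 - j))
        + QQ.eval t * (z - t)⁻¹ := by
  have hdd : (∑ i ∈ Finset.range N, QQ.coeff i * ∑ j ∈ Finset.range i, z ^ j * t ^ (i - 1 - j))
      * (z - t) = QQ.eval z - QQ.eval t := by
    rw [Finset.sum_mul, eval_eq_sum_range' hQ, eval_eq_sum_range' hQ, ← Finset.sum_sub_distrib]
    refine Finset.sum_congr rfl fun i _ => ?_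
    rw [mul_assoc, geom_sum₂_mul z t i]
    ring
  apply mul_right_cancel₀ h
  rw [add_mul, mul_assoc, mul_assoc, inv_mul_cancel₀ h, mul_one, mul_one, hdd]
  ring

private lemma alg2 (n : ℕ) {z t : ℂ} (w : ℂ) (h : z - t ≠ 0) :
    z ^ (n + 1) * (w * (z - t)⁻¹) =
      (∑ j ∈ Finset.range n, (t ^ j * w) * z ^ (n - j)) + z * ((t ^ n * w) * (z - t)⁻¹) := by
  have hg : (∑ j ∈ Finset.range n, t ^ j * z ^ (n - 1 - j)) * (t - z) = t ^ n - z ^ n :=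
    geom_sum₂_mul t z n
  have hs : (∑ j ∈ Finset.range n, (t ^ j * w) * z ^ (n - j)) =
      w * ((∑ j ∈ Finset.range n, t ^ j * z ^ (n - 1 - j)) * z) := by
    rw [Finset.sum_mul, Finset.mul_sum]
    refine Finset.sum_congr rfl fun j hj => ?_
    have hnj : n - j = (n - 1 - j) + 1 := by
      have := Finset.mem_range.mp hj; omega
    rw [hnj, pow_succ]; ring
  apply mul_right_cancel₀ h
  rw [add_mul, mul_assoc (z ^ (n + 1)), mul_assoc w, inv_mul_cancel₀ h, mul_one, hs,
    mul_assoc z, mul_assoc (t ^ n * w), inv_mul_cancel₀ h, mul_one]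
  linear_combination (z * w) * hg
theorem pade_denominator_orthogonality
    (σ : Measure ℝ) [IsFiniteMeasure σ]
    (K : Set ℝ) (hK : IsCompact K) (hKfull : σ Kᶜ = 0)
    (n : ℕ) (P Q : Polynomial ℂ)
    (hP : P.natDegree ≤ n) (hQ : Q.natDegree ≤ n) (hQ0 : Q ≠ 0)
    (hpade : ∃ C R : ℝ, ∀ z : ℂ, R < ‖z‖ →
      ‖z ^ (n + 1) *
        (Q.eval z * (∫ t : ℝ, (z - (t : ℂ))⁻¹ ∂σ) - P.eval z)‖ ≤ C) :
    ∀ k < n, ∫ t : ℝ, (t : ℂ) ^ k * Q.eval (t : ℂ) ∂σ = 0 := by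
  classical
  intro k hk
  have hae : ∀ᵐ t ∂σ, t ∈ K := by
    rw [ae_iff]; exact hKfull
  obtain ⟨M₀, hM₀⟩ := hK.isBounded.subset_closedBall 0
  set M : ℝ := max M₀ 0 with hMdef
  have hM : ∀ t ∈ K, |t| ≤ M := by
    intro t ht
    have h := hM₀ ht
    rw [Metric.mem_closedBall, Real.dist_eq, sub_zero] at h
    exact h.trans (le_max_left _ _)
  have hM0 : (0:ℝ) ≤ M := le_max_right _ _
  have hQc : Continuous fun t : ℝ => Q.eval (t : ℂ) :=
    Q.continuous.comp Complex.continuous_ofReal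
  obtain ⟨CQ₀, hCQ₀⟩ := hK.exists_bound_of_continuousOn hQc.continuousOn
  set CQ : ℝ := max CQ₀ 0 with hCQdef
  have hCQ : ∀ t ∈ K, ‖Q.eval (t:ℂ)‖ ≤ CQ := fun t ht => (hCQ₀ t ht).trans (le_max_left _ _)
  have hCQ0 : (0:ℝ) ≤ CQ := le_max_right _ _
  have σtot0 : (0:ℝ) ≤ (σ Set.univ).toReal := ENNReal.toReal_nonneg
  have hmono : ∀ m : ℕ, Continuous fun t : ℝ => (t:ℂ)^m * Q.eval (t:ℂ) :=
    fun m => (Complex.continuous_ofReal.pow m).mul hQc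
  have hbnd : ∀ m : ℕ, ∀ t ∈ K, ‖(t:ℂ)^m * Q.eval (t:ℂ)‖ ≤ M^m * CQ := by
    intro m t ht
    rw [norm_mul, norm_pow, Complex.norm_real, Real.norm_eq_abs]
    exact mul_le_mul (pow_le_pow_left₀ (abs_nonneg t) (hM t ht) m) (hCQ t ht)
      (norm_nonneg _) (pow_nonneg hM0 m)
  have hcint : ∀ m : ℕ, Integrable (fun t : ℝ => (t:ℂ)^m * Q.eval (t:ℂ)) σ :=
    fun m => aux_int hae ((hmono m).aestronglyMeasurable) (hbnd m)
  have hmomint : ∀ m : ℕ, Integrable (fun t : ℝ => (t:ℂ)^m) σ := by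
    intro m
    refine aux_int hae ((Complex.continuous_ofReal.pow m).aestronglyMeasurable)
      (C := M^m) ?_
    intro t ht
    rw [norm_pow, Complex.norm_real, Real.norm_eq_abs]
    exact pow_le_pow_left₀ (abs_nonneg t) (hM t ht) m
  set c : ℕ → ℂ := fun j => ∫ t : ℝ, (t:ℂ)^j * Q.eval (t:ℂ) ∂σ with hcdef
  set μm : ℕ → ℂ := fun j => ∫ t : ℝ, (t:ℂ)^j ∂σ with hμdef
  set S : ℂ → ℂ := fun z => ∫ t : ℝ, Q.eval (t:ℂ) * (z - (t:ℂ))⁻¹ ∂σ with hSdef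
  set T : ℂ → ℂ := fun z => ∫ t : ℝ, ((t:ℂ)^n * Q.eval (t:ℂ)) * (z - (t:ℂ))⁻¹ ∂σ with hTdef
  set g : ℂ → ℂ := fun z => Q.eval z * (∫ t : ℝ, (z - (t:ℂ))⁻¹ ∂σ) - P.eval z with hgdef
  set E : ℂ → ℂ := fun z =>
    (∑ i ∈ Finset.range (n+1), Q.coeff i * ∑ j ∈ Finset.range i, z^j * μm (i-1-j))
      - P.eval z with hEdef
  have hne : ∀ z : ℂ, M < ‖z‖ → ∀ᵐ t : ℝ ∂σ, z - (t:ℂ) ≠ 0 := by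
    intro z hz
    refine hae.mono fun t ht h => ?_
    rw [sub_eq_zero] at h
    rw [h, Complex.norm_real, Real.norm_eq_abs] at hz
    linarith [hM t ht]
  -- Step 1 : g = E + S outside the disc of radius M
  have step1 : ∀ z : ℂ, M < ‖z‖ → g z = E z + S z := by
    intro z hz
    have hSint : Integrable (fun t : ℝ => Q.eval (t:ℂ) * (z - (t:ℂ))⁻¹) σ :=
      (aux_cauchy hae hQc hCQ hM hz).1
    have hin : ∀ i ∈ Finset.range (n+1), Integrable
        (fun t : ℝ => Q.coeff i * ∑ j ∈ Finset.range i, z^j * (t:ℂ)^(i-1-j)) σ :=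
      fun i _ => Integrable.const_mul
        (integrable_finset_sum _ fun j _ => (hmomint _).const_mul _) _
    have hDDint : Integrable (fun t : ℝ =>
        ∑ i ∈ Finset.range (n+1), Q.coeff i * ∑ j ∈ Finset.range i, z^j * (t:ℂ)^(i-1-j)) σ :=
      integrable_finset_sum _ hin
    have key : (fun t : ℝ => Q.eval z * (z - (t:ℂ))⁻¹) =ᵐ[σ]
        fun t : ℝ => (∑ i ∈ Finset.range (n+1),
            Q.coeff i * ∑ j ∈ Finset.range i, z^j * (t:ℂ)^(i-1-j))
          + Q.eval (t:ℂ) * (z - (t:ℂ))⁻¹ :=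
      (hne z hz).mono fun t ht => alg1 Q (Nat.lt_succ_of_le hQ) ht
    have h2 : (∫ t : ℝ, (∑ i ∈ Finset.range (n+1),
          Q.coeff i * ∑ j ∈ Finset.range i, z^j * (t:ℂ)^(i-1-j)) ∂σ)
        = ∑ i ∈ Finset.range (n+1), Q.coeff i * ∑ j ∈ Finset.range i, z^j * μm (i-1-j) := by
      rw [integral_finset_sum _ hin]
      refine Finset.sum_congr rfl fun i _ => ?_
      rw [integral_const_mul]
      congr 1
      rw [integral_finset_sum _ (fun j _ => (hmomint _).const_mul _)]
      exact Finset.sum_congr rfl fun j _ => integral_const_mul _ _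
    simp only [hgdef, hEdef, hSdef]
    rw [← integral_const_mul, integral_congr_ae key, integral_add hDDint hSint, h2]
    ring
  -- Padé data
  obtain ⟨C, R, hCR⟩ := hpade
  have hC0 : (0:ℝ) ≤ C := by
    have h1 : R < ‖((max R 0 + 1 : ℝ) : ℂ)‖ := by
      rw [Complex.norm_real, Real.norm_eq_abs, abs_of_nonneg (by positivity)]
      have : R ≤ max R 0 := le_max_left _ _
      linarith
    exact le_trans (norm_nonneg _) (hCR _ h1)
  have hgb : ∀ z : ℂ, max R 1 < ‖z‖ → ‖z‖ * ‖g z‖ ≤ C := by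
    intro z hz
    have h1 := hCR z (lt_of_le_of_lt (le_max_left _ _) hz)
    rw [norm_mul, norm_pow] at h1
    have hz1 : (1:ℝ) ≤ ‖z‖ := le_of_lt (lt_of_le_of_lt (le_max_right R 1) hz)
    have h2 : ‖z‖ ≤ ‖z‖ ^ (n+1) :=
      le_self_pow₀ (by linarith) (Nat.succ_ne_zero n)
    have h3 : ‖z‖ * ‖g z‖ ≤ ‖z‖ ^ (n+1) * ‖g z‖ :=
      mul_le_mul_of_nonneg_right h2 (norm_nonneg _)
    refine h3.trans ?_
    simpa only [hgdef] using h1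
  -- radius R2
  set R2 : ℝ := max (max R 1) (2*M + 1) with hR2def
  have hR2M : M < R2 := by
    have h := le_max_right (max R 1) (2*M + 1); linarith
  have hSb : ∀ z : ℂ, R2 < ‖z‖ →
      ‖S z‖ ≤ CQ * (‖z‖ - M)⁻¹ * (σ Set.univ).toReal :=
    fun z hz => (aux_cauchy hae hQc hCQ hM (lt_trans hR2M hz)).2
  have hTb : ∀ z : ℂ, R2 < ‖z‖ →
      ‖T z‖ ≤ (M^n * CQ) * (‖z‖ - M)⁻¹ * (σ Set.univ).toReal :=
    fun z hz => (aux_cauchy hae (hmono n) (hbnd n) hM (lt_trans hR2M hz)).2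
  have hEout : ∀ z : ℂ, R2 < ‖z‖ → ‖E z‖ ≤ C + CQ * (σ Set.univ).toReal := by
    intro z hz
    have hzM : M < ‖z‖ := lt_trans hR2M hz
    have hE : E z = g z - S z := by rw [step1 z hzM]; ring
    rw [hE]
    have h1 : ‖g z‖ ≤ C := by
      have hz1 : (1:ℝ) ≤ ‖z‖ := by
        have ha := le_max_right R 1
        have hb := le_max_left (max R 1) (2*M + 1)
        linarith
      have h := hgb z (lt_of_le_of_lt (le_max_left (max R 1) (2*M + 1)) hz)
      nlinarith [norm_nonneg (g z)]
    have h2 : ‖S z‖ ≤ CQ * (σ Set.univ).toReal := by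
      have h3 := hSb z hz
      have h1M : (1:ℝ) ≤ ‖z‖ - M := by
        have hb := le_max_right (max R 1) (2*M + 1); linarith
      have h4 : (‖z‖ - M)⁻¹ ≤ 1 := by
        simpa using inv_anti₀ one_pos h1M
      calc ‖S z‖ ≤ CQ * (‖z‖ - M)⁻¹ * (σ Set.univ).toReal := h3
        _ ≤ CQ * 1 * (σ Set.univ).toReal :=
            mul_le_mul_of_nonneg_right (mul_le_mul_of_nonneg_left h4 hCQ0) σtot0
        _ = CQ * (σ Set.univ).toReal := by ring
    calc ‖g z - S z‖ ≤ ‖g z‖ + ‖S z‖ := norm_sub_le _ _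
      _ ≤ C + CQ * (σ Set.univ).toReal := add_le_add h1 h2
  have hEdiff : Differentiable ℂ E := by
    rw [hEdef]
    refine Differentiable.sub ?_ P.differentiable
    refine Differentiable.fun_sum fun i _ => ?_
    refine Differentiable.const_mul ?_ _
    exact Differentiable.fun_sum fun j _ => (differentiable_pow j).mul_const _
  obtain ⟨C₂, hC₂⟩ :=
    (isCompact_closedBall (0:ℂ) R2).exists_bound_of_continuousOn hEdiff.continuous.continuousOn
  have hEbd : ∀ z : ℂ, ‖E z‖ ≤ max (C + CQ * (σ Set.univ).toReal) C₂ := by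
    intro z
    rcases le_or_gt (‖z‖) R2 with h | h
    · refine le_max_of_le_right (hC₂ z ?_)
      rwa [Metric.mem_closedBall, Complex.dist_eq, sub_zero]
    · exact le_max_of_le_left (hEout z h)
  have hrange : Bornology.IsBounded (Set.range E) :=
    isBounded_iff_forall_norm_le.mpr ⟨_, Set.forall_mem_range.mpr hEbd⟩
  have hconst : ∀ z : ℂ, E z = E 0 := fun z => hEdiff.apply_eq_apply_of_bounded hrange z 0
  have heventu : ∀ᶠ x : ℝ in atTop,
      ‖E (x:ℂ)‖ ≤ C / x + CQ * (x - M)⁻¹ * (σ Set.univ).toReal := by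
    filter_upwards [Filter.eventually_gt_atTop (max R2 0)] with x hx
    have hx0 : (0:ℝ) < x := lt_of_le_of_lt (le_max_right _ _) hx
    have habs : ‖(x:ℂ)‖ = x := by rw [Complex.norm_real, Real.norm_eq_abs, abs_of_pos hx0]
    have hzR2 : R2 < ‖(x:ℂ)‖ := by
      rw [habs]; exact lt_of_le_of_lt (le_max_left _ _) hx
    have hzM : M < ‖(x:ℂ)‖ := lt_trans hR2M hzR2
    have hE : E (x:ℂ) = g (x:ℂ) - S (x:ℂ) := by rw [step1 _ hzM]; ring
    have h1 : ‖g (x:ℂ)‖ ≤ C / x := by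
      have h := hgb (x:ℂ) (lt_of_le_of_lt (le_max_left (max R 1) (2*M + 1)) hzR2)
      rw [habs] at h
      rw [le_div_iff₀ hx0]
      linarith
    have h2 := hSb (x:ℂ) hzR2
    rw [habs] at h2
    rw [hE]
    calc ‖g (x:ℂ) - S (x:ℂ)‖ ≤ ‖g (x:ℂ)‖ + ‖S (x:ℂ)‖ := norm_sub_le _ _
      _ ≤ _ := add_le_add h1 h2
  have htend : Tendsto (fun x : ℝ => C / x + CQ * (x - M)⁻¹ * (σ Set.univ).toReal)
      atTop (nhds 0) := by
    have t1 : Tendsto (fun x : ℝ => C / x) atTop (nhds 0) :=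
      tendsto_const_nhds.div_atTop tendsto_id
    have t2' : Tendsto (fun x : ℝ => x - M) atTop atTop := by
      simpa [sub_eq_add_neg] using tendsto_atTop_add_const_right atTop (-M) tendsto_id
    have t2 : Tendsto (fun x : ℝ => (x - M)⁻¹) atTop (nhds 0) := t2'.inv_tendsto_atTop
    have t3 : Tendsto (fun x : ℝ => CQ * (x - M)⁻¹ * (σ Set.univ).toReal) atTop (nhds 0) := by
      have := (t2.const_mul CQ).mul_const ((σ Set.univ).toReal)
      simpa using this
    have := t1.add t3
    simpa using this
  have hlim : Tendsto (fun x : ℝ => ‖E (x:ℂ)‖) atTop (nhds 0) :=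
    squeeze_zero' (Filter.Eventually.of_forall fun x => norm_nonneg _) heventu htend
  have hE0 : ∀ z : ℂ, E z = 0 := by
    have h1 : Tendsto (fun x : ℝ => ‖E (x:ℂ)‖) atTop (nhds ‖E 0‖) := by
      have hfe : (fun x : ℝ => ‖E (x:ℂ)‖) = fun _ => ‖E 0‖ := funext fun x => by rw [hconst]
      rw [hfe]; exact tendsto_const_nhds
    have h2 : ‖E 0‖ = 0 := tendsto_nhds_unique h1 hlim
    intro z
    rw [hconst z, ← norm_eq_zero]
    exact h2
  have hgS : ∀ z : ℂ, M < ‖z‖ → g z = S z := by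
    intro z hz; rw [step1 z hz, hE0, zero_add]
  -- Step 4 : z^(n+1) S z = sum + z T z
  have step4 : ∀ z : ℂ, M < ‖z‖ →
      (∑ j ∈ Finset.range n, c j * z^(n-j)) = z^(n+1) * S z - z * T z := by
    intro z hz
    have hTint : Integrable (fun t : ℝ => ((t:ℂ)^n * Q.eval (t:ℂ)) * (z - (t:ℂ))⁻¹) σ :=
      (aux_cauchy hae (hmono n) (hbnd n) hM hz).1
    have hin : ∀ j ∈ Finset.range n,
        Integrable (fun t : ℝ => ((t:ℂ)^j * Q.eval (t:ℂ)) * z^(n-j)) σ :=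
      fun j _ => (hcint j).mul_const _
    have key : (fun t : ℝ => z^(n+1) * (Q.eval (t:ℂ) * (z - (t:ℂ))⁻¹)) =ᵐ[σ]
        fun t : ℝ => (∑ j ∈ Finset.range n, ((t:ℂ)^j * Q.eval (t:ℂ)) * z^(n-j))
          + z * (((t:ℂ)^n * Q.eval (t:ℂ)) * (z - (t:ℂ))⁻¹) :=
      (hne z hz).mono fun t ht => alg2 n (Q.eval (t:ℂ)) ht
    have h1 : z^(n+1) * S z = (∑ j ∈ Finset.range n, c j * z^(n-j)) + z * T z := by
      simp only [hSdef, hTdef, hcdef]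
      rw [← integral_const_mul, integral_congr_ae key,
        integral_add (integrable_finset_sum _ hin) (hTint.const_mul z),
        integral_finset_sum _ hin, integral_const_mul]
      congr 1
      exact Finset.sum_congr rfl fun j _ => integral_mul_const _ _
    rw [h1]; ring
  -- boundedness of the sum
  have hpbd_out : ∀ z : ℂ, R2 < ‖z‖ →
      ‖∑ j ∈ Finset.range n, c j * z^(n-j)‖ ≤ C + 2 * (M^n * CQ * (σ Set.univ).toReal) := by
    intro z hz
    have hzM : M < ‖z‖ := lt_trans hR2M hz
    have hRz : R < ‖z‖ :=
      lt_of_le_of_lt (le_trans (le_max_left R 1) (le_max_left (max R 1) (2*M + 1))) hz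
    rw [step4 z hzM]
    have h1 : ‖z^(n+1) * S z‖ ≤ C := by
      rw [← hgS z hzM]
      simp only [hgdef]
      exact hCR z hRz
    have h2 : ‖z * T z‖ ≤ 2 * (M^n * CQ * (σ Set.univ).toReal) := by
      rw [norm_mul]
      have h3 := hTb z hz
      have h4 : ‖z‖ * ‖T z‖ ≤
          ‖z‖ * ((M^n * CQ) * (‖z‖ - M)⁻¹ * (σ Set.univ).toReal) :=
        mul_le_mul_of_nonneg_left h3 (norm_nonneg _)
      have h5 : ‖z‖ * ((M^n * CQ) * (‖z‖ - M)⁻¹ * (σ Set.univ).toReal)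
          = (‖z‖ * (‖z‖ - M)⁻¹) * (M^n * CQ * (σ Set.univ).toReal) := by
        ring
      have h6 : ‖z‖ * (‖z‖ - M)⁻¹ ≤ 2 := by
        have hds : (0:ℝ) < ‖z‖ - M := by linarith
        rw [← div_eq_mul_inv, div_le_iff₀ hds]
        have hb := le_max_right (max R 1) (2*M + 1)
        linarith
      calc ‖z‖ * ‖T z‖ ≤ _ := h4
        _ = _ := h5
        _ ≤ 2 * (M^n * CQ * (σ Set.univ).toReal) :=
            mul_le_mul_of_nonneg_right h6 (by positivity)
    calc ‖z^(n+1) * S z - z * T z‖ ≤ ‖z^(n+1) * S z‖ + ‖z * T z‖ := norm_sub_le _ _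
      _ ≤ _ := add_le_add h1 h2
  -- Liouville for the sum
  have hpdiff : Differentiable ℂ (fun z : ℂ => ∑ j ∈ Finset.range n, c j * z^(n-j)) :=
    Differentiable.fun_sum fun j _ => (differentiable_pow _).const_mul _
  obtain ⟨C₃, hC₃⟩ :=
    (isCompact_closedBall (0:ℂ) R2).exists_bound_of_continuousOn hpdiff.continuous.continuousOn
  have hpbd : ∀ z : ℂ, ‖∑ j ∈ Finset.range n, c j * z^(n-j)‖ ≤
      max (C + 2 * (M^n * CQ * (σ Set.univ).toReal)) C₃ := by
    intro z
    rcases le_or_gt (‖z‖) R2 with h | h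
    · refine le_max_of_le_right (hC₃ z ?_)
      rwa [Metric.mem_closedBall, Complex.dist_eq, sub_zero]
    · exact le_max_of_le_left (hpbd_out z h)
  have hprange : Bornology.IsBounded
      (Set.range fun z : ℂ => ∑ j ∈ Finset.range n, c j * z^(n-j)) :=
    isBounded_iff_forall_norm_le.mpr ⟨_, Set.forall_mem_range.mpr hpbd⟩
  have hpconst : ∀ z : ℂ, (∑ j ∈ Finset.range n, c j * z^(n-j))
      = ∑ j ∈ Finset.range n, c j * (0:ℂ)^(n-j) :=
    fun z => hpdiff.apply_eq_apply_of_bounded hprange z 0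
  have hp0 : (∑ j ∈ Finset.range n, c j * (0:ℂ)^(n-j)) = 0 := by
    refine Finset.sum_eq_zero fun j hj => ?_
    rw [zero_pow (Nat.sub_ne_zero_of_lt (Finset.mem_range.mp hj)), mul_zero]
  have hpz : ∀ z : ℂ, (∑ j ∈ Finset.range n, c j * z^(n-j)) = 0 :=
    fun z => (hpconst z).trans hp0
  -- extract the coefficient
  have hq : (∑ j ∈ Finset.range n, Polynomial.C (c j) * Polynomial.X ^ (n - j))
      = (0 : Polynomial ℂ) := by
    apply Polynomial.funext
    intro r
    rw [Polynomial.eval_zero]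
    simpa [Polynomial.eval_finset_sum] using hpz r
  have hcoeff := congrArg (fun q : Polynomial ℂ => q.coeff (n - k)) hq
  simp only [Polynomial.finset_sum_coeff, Polynomial.coeff_C_mul, Polynomial.coeff_X_pow,
    Polynomial.coeff_zero, mul_ite, mul_one, mul_zero] at hcoeff
  rw [Finset.sum_eq_single k
    (fun j hj hjk => by
      have hj' := Finset.mem_range.mp hj
      exact if_neg (by omega))
    (fun hkk => absurd (Finset.mem_range.mpr hk) hkk), if_pos rfl] at hcoeff
  exact hcoeff
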